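/- For every infinite virtually cyclic subgroup K of Houghton's group H_n there exists an infinite cyclic subgroup L of finite index in K (in particular K ∩ L is infinite, i.e., L is commensurate with K) such that every g ∈ H_n for which L ∩ gLg⁻¹ is infinite normalizes L; that is, {g ∈ H_n : |L ∩ gLg⁻¹| = ∞} = N_{H_n}(L). -/

import Mathlib

/-- `f : ℕ × Fin n → ℕ × Fin n` is eventually a translation with translation
vector `m : Fin n → ℤ`: on each ray `ℕ × {x}`, for all sufficiently large `i`,
`f` sends `(i, x)` to `(i + m x, x)`. -/
def EvTrans (n : ℕ) (f : ℕ × Fin n → ℕ × Fin n) (m : Fin n → ℤ) : Prop :=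
  ∀ x : Fin n, ∃ z : ℕ, ∀ i : ℕ, z ≤ i →
    (f (i, x)).2 = x ∧ ((f (i, x)).1 : ℤ) = (i : ℤ) + m x

/-- Houghton's group `H_n`: the subgroup of the symmetric group on
`S = ℕ × Fin n` consisting of the permutations that are eventually
translations on each ray. -/
def Houghton (n : ℕ) : Subgroup (Equiv.Perm (ℕ × Fin n)) where
  carrier := {f : Equiv.Perm (ℕ × Fin n) | ∃ m : Fin n → ℤ, EvTrans n (⇑f) m}
  one_mem' := ⟨0, fun x => ⟨0, fun i _ => by simp⟩⟩
  mul_mem' := by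
    rintro a b ⟨ma, hA⟩ ⟨mb, hB⟩
    refine ⟨ma + mb, fun x => ?_⟩
    obtain ⟨za, hza⟩ := hA x
    obtain ⟨zb, hzb⟩ := hB x
    refine ⟨max zb ((za : ℤ) - mb x).toNat, fun i hi => ?_⟩
    have hib : zb ≤ i := le_trans (le_max_left _ _) hi
    obtain ⟨h2, h1⟩ := hzb i hib
    have hbx : (⇑b) (i, x) = ((b (i, x)).1, x) := Prod.ext_iff.mpr ⟨rfl, h2⟩
    have hk : za ≤ (b (i, x)).1 := by
      have h3 : ((za : ℤ) - mb x) ≤ (i : ℤ) := by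
        calc ((za : ℤ) - mb x) ≤ (((za : ℤ) - mb x).toNat : ℤ) := Int.self_le_toNat _
          _ ≤ (i : ℤ) := by exact_mod_cast le_trans (le_max_right _ _) hi
      have h4 : (za : ℤ) ≤ ((b (i, x)).1 : ℤ) := by rw [h1]; linarith
      exact_mod_cast h4
    obtain ⟨h4, h5⟩ := hza (b (i, x)).1 hk
    constructor
    · show ((a * b) (i, x)).2 = x
      rw [Equiv.Perm.mul_apply, hbx]
      exact h4
    · show (((a * b) (i, x)).1 : ℤ) = (i : ℤ) + (ma + mb) x
      rw [Equiv.Perm.mul_apply, hbx, h5, h1, Pi.add_apply]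
      ring
  inv_mem' := by
    rintro a ⟨m, hm⟩
    refine ⟨-m, fun x => ?_⟩
    obtain ⟨z, hz⟩ := hm x
    refine ⟨((z : ℤ) + m x).toNat, fun i hi => ?_⟩
    have h1 : (z : ℤ) + m x ≤ (i : ℤ) :=
      le_trans (Int.self_le_toNat _) (by exact_mod_cast hi)
    have h0 : (0 : ℤ) ≤ (i : ℤ) - m x := by
      have hz0 : (0 : ℤ) ≤ (z : ℤ) := Int.natCast_nonneg z
      linarith
    set j := ((i : ℤ) - m x).toNat with hjdef
    have hj' : (j : ℤ) = (i : ℤ) - m x := Int.toNat_of_nonneg h0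
    have hjz : z ≤ j := by
      have : (z : ℤ) ≤ (j : ℤ) := by rw [hj']; linarith
      exact_mod_cast this
    obtain ⟨h2, h3⟩ := hz j hjz
    have hfst : (a (j, x)).1 = i := by
      have : ((a (j, x)).1 : ℤ) = (i : ℤ) := by rw [h3, hj']; ring
      exact_mod_cast this
    have hfix : (⇑a) (j, x) = (i, x) := Prod.ext_iff.mpr ⟨hfst, h2⟩
    have hinv : (⇑a⁻¹) (i, x) = (j, x) := by
      rw [← hfix]
      exact Equiv.symm_apply_apply a (j, x)
    constructor
    · rw [hinv]
    · rw [hinv]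
      show (j : ℤ) = (i : ℤ) + (-m) x
      rw [hj', Pi.neg_apply]
      ring
section Aux

open Equiv Subgroup

variable {n : ℕ}

private lemma evtrans_mul {a b : Equiv.Perm (ℕ × Fin n)} {ma mb : Fin n → ℤ}
    (hA : EvTrans n (⇑a) ma) (hB : EvTrans n (⇑b) mb) :
    EvTrans n (⇑(a * b)) (ma + mb) := by
  intro x
  obtain ⟨za, hza⟩ := hA x
  obtain ⟨zb, hzb⟩ := hB x
  refine ⟨max zb ((za : ℤ) - mb x).toNat, fun i hi => ?_⟩
  have hib : zb ≤ i := le_trans (le_max_left _ _) hi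
  obtain ⟨h2, h1⟩ := hzb i hib
  have hbx : (⇑b) (i, x) = ((b (i, x)).1, x) := Prod.ext_iff.mpr ⟨rfl, h2⟩
  have hk : za ≤ (b (i, x)).1 := by
    have h3 : ((za : ℤ) - mb x) ≤ (i : ℤ) := by
      calc ((za : ℤ) - mb x) ≤ (((za : ℤ) - mb x).toNat : ℤ) := Int.self_le_toNat _
        _ ≤ (i : ℤ) := by exact_mod_cast le_trans (le_max_right _ _) hi
    have h4 : (za : ℤ) ≤ ((b (i, x)).1 : ℤ) := by rw [h1]; linarith
    exact_mod_cast h4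
  obtain ⟨h4, h5⟩ := hza (b (i, x)).1 hk
  constructor
  · show ((a * b) (i, x)).2 = x
    rw [Equiv.Perm.mul_apply, hbx]
    exact h4
  · show (((a * b) (i, x)).1 : ℤ) = (i : ℤ) + (ma + mb) x
    rw [Equiv.Perm.mul_apply, hbx, h5, h1, Pi.add_apply]
    ring

private lemma evtrans_inv {a : Equiv.Perm (ℕ × Fin n)} {m : Fin n → ℤ}
    (hm : EvTrans n (⇑a) m) : EvTrans n (⇑a⁻¹) (-m) := by
  intro x
  obtain ⟨z, hz⟩ := hm x
  refine ⟨((z : ℤ) + m x).toNat, fun i hi => ?_⟩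
  have h1 : (z : ℤ) + m x ≤ (i : ℤ) :=
    le_trans (Int.self_le_toNat _) (by exact_mod_cast hi)
  have h0 : (0 : ℤ) ≤ (i : ℤ) - m x := by
    have hz0 : (0 : ℤ) ≤ (z : ℤ) := Int.natCast_nonneg z
    linarith
  set j := ((i : ℤ) - m x).toNat with hjdef
  have hj' : (j : ℤ) = (i : ℤ) - m x := Int.toNat_of_nonneg h0
  have hjz : z ≤ j := by
    have : (z : ℤ) ≤ (j : ℤ) := by rw [hj']; linarith
    exact_mod_cast this
  obtain ⟨h2, h3⟩ := hz j hjz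
  have hfst : (a (j, x)).1 = i := by
    have : ((a (j, x)).1 : ℤ) = (i : ℤ) := by rw [h3, hj']; ring
    exact_mod_cast this
  have hfix : (⇑a) (j, x) = (i, x) := Prod.ext_iff.mpr ⟨hfst, h2⟩
  have hinv : (⇑a⁻¹) (i, x) = (j, x) := by
    rw [← hfix]; exact Equiv.symm_apply_apply a (j, x)
  constructor
  · rw [hinv]
  · rw [hinv]
    show (j : ℤ) = (i : ℤ) + (-m) x
    rw [hj', Pi.neg_apply]; ring

private lemma evtrans_one : EvTrans n (⇑(1 : Equiv.Perm (ℕ × Fin n))) 0 :=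
  fun _ => ⟨0, fun i _ => by simp⟩

private lemma evtrans_unique {f : (ℕ × Fin n) → (ℕ × Fin n)} {m m' : Fin n → ℤ}
    (h : EvTrans n f m) (h' : EvTrans n f m') : m = m' := by
  funext x
  obtain ⟨z, hz⟩ := h x
  obtain ⟨z', hz'⟩ := h' x
  have h1 := (hz (max z z') (le_max_left _ _)).2
  have h2 := (hz' (max z z') (le_max_right _ _)).2
  rw [h1] at h2
  linarith

private lemma evtrans_pow {a : Equiv.Perm (ℕ × Fin n)} {m : Fin n → ℤ}
    (hm : EvTrans n (⇑a) m) (t : ℕ) : EvTrans n (⇑(a ^ t)) ((t : ℤ) • m) := by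
  induction t with
  | zero => simpa using evtrans_one
  | succ s ih =>
      have := evtrans_mul ih hm
      rw [← pow_succ] at this
      convert this using 1
      funext x
      simp only [Pi.add_apply, Pi.smul_apply, smul_eq_mul]
      push_cast
      ring

private lemma evtrans_zpow {a : Equiv.Perm (ℕ × Fin n)} {m : Fin n → ℤ}
    (hm : EvTrans n (⇑a) m) (t : ℤ) : EvTrans n (⇑(a ^ t)) (t • m) := by
  rcases t with s | s
  · rw [Int.ofNat_eq_coe, zpow_natCast]
    simpa using evtrans_pow hm s
  · rw [zpow_negSucc]
    have := evtrans_inv (evtrans_pow hm (s + 1))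
    convert this using 1
    funext x
    simp [Int.negSucc_eq]
    ring

private lemma fixed_pow {a : Equiv.Perm (ℕ × Fin n)} {u : ℕ × Fin n}
    (h : a u = u) (t : ℕ) : (a ^ t) u = u := by
  induction t with
  | zero => simp
  | succ s ih => rw [pow_succ, Equiv.Perm.mul_apply, h]; exact ih

private lemma pow_apply_commute (a : Equiv.Perm (ℕ × Fin n)) (s t : ℕ) (u : ℕ × Fin n) :
    (a ^ s) ((a ^ t) u) = (a ^ t) ((a ^ s) u) := by
  rw [← Equiv.Perm.mul_apply, ← Equiv.Perm.mul_apply, pow_mul_comm]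

/-- Key construction: every infinite-order element of Houghton's group has
nonzero translation vector, and some positive power of it is "pure": all
finite orbits of the power are fixed points. -/
private lemma exists_good_power (h : Equiv.Perm (ℕ × Fin n)) (m : Fin n → ℤ)
    (hm : EvTrans n (⇑h) m) (hord : ¬ IsOfFinOrder h) :
    m ≠ 0 ∧ ∃ N : ℕ, 0 < N ∧
      ∀ (u : ℕ × Fin n) (d : ℕ), 0 < d → ((h ^ N) ^ d) u = u → (h ^ N) u = u := by
  classical
  have hm' : EvTrans n (⇑h⁻¹) (-m) := evtrans_inv hm
  -- combined uniform threshold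
  have hzx : ∀ x : Fin n, ∃ z : ℕ, ∀ i : ℕ, z ≤ i →
      ((h (i, x)).2 = x ∧ ((h (i, x)).1 : ℤ) = (i : ℤ) + m x) ∧
      ((h⁻¹ (i, x)).2 = x ∧ ((h⁻¹ (i, x)).1 : ℤ) = (i : ℤ) + (-m) x) := by
    intro x
    obtain ⟨z1, h1⟩ := hm x
    obtain ⟨z2, h2⟩ := hm' x
    exact ⟨max z1 z2, fun i hi =>
      ⟨h1 i (le_trans (le_max_left _ _) hi), h2 i (le_trans (le_max_right _ _) hi)⟩⟩
  choose z hzspec using hzx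
  set Z : ℕ := Finset.univ.sup z with hZdef
  have hZ : ∀ (x : Fin n) (i : ℕ), Z ≤ i →
      ((h (i, x)).2 = x ∧ ((h (i, x)).1 : ℤ) = (i : ℤ) + m x) ∧
      ((h⁻¹ (i, x)).2 = x ∧ ((h⁻¹ (i, x)).1 : ℤ) = (i : ℤ) + (-m) x) := by
    intro x i hi
    exact hzspec x i (le_trans (Finset.le_sup (Finset.mem_univ x)) hi)
  -- forward escape for positive translation
  have forward : ∀ (σ : Equiv.Perm (ℕ × Fin n)) (μ : Fin n → ℤ),
      (∀ (x : Fin n) (i : ℕ), Z ≤ i → (σ (i, x)).2 = x ∧ ((σ (i, x)).1 : ℤ) = (i : ℤ) + μ x) →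
      ∀ (x : Fin n), 0 < μ x → ∀ i : ℕ, Z ≤ i → ∀ t : ℕ,
        ∃ j : ℕ, (σ ^ t) (i, x) = (j, x) ∧ (j : ℤ) = (i : ℤ) + t * μ x := by
    intro σ μ hσ x hx i hi t
    induction t with
    | zero => exact ⟨i, by simp⟩
    | succ s ih =>
        obtain ⟨j, hj1, hj2⟩ := ih
        have hij : (i : ℤ) ≤ j := by
          rw [hj2]
          have : 0 ≤ (s : ℤ) * μ x := mul_nonneg (Int.natCast_nonneg s) (le_of_lt hx)
          linarith
        have hZj : Z ≤ j := le_trans hi (by exact_mod_cast hij)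
        obtain ⟨hs2, hs1⟩ := hσ x j hZj
        refine ⟨(σ (j, x)).1, ?_, ?_⟩
        · rw [pow_succ', Equiv.Perm.mul_apply, hj1]
          exact Prod.ext_iff.mpr ⟨rfl, hs2⟩
        · rw [hs1, hj2]; push_cast; ring
  -- points far out on a moving ray are non-periodic
  have nonper : ∀ (x : Fin n) (i : ℕ), m x ≠ 0 → Z ≤ i → ∀ d : ℕ, 0 < d →
      (h ^ d) (i, x) ≠ (i, x) := by
    intro x i hmx hi d hd
    rcases lt_or_gt_of_ne hmx with hneg | hpos
    · -- use h⁻¹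
      obtain ⟨j, hj1, hj2⟩ := forward h⁻¹ (-m) (fun x i hi => (hZ x i hi).2) x
        (by rw [Pi.neg_apply]; exact neg_pos.mpr hneg) i hi d
      intro hcon
      have hinvfix : (h ^ d)⁻¹ (i, x) = (i, x) := by
        conv_lhs => rw [← hcon]
        exact Equiv.symm_apply_apply _ _
      rw [← inv_pow] at hinvfix
      rw [hinvfix] at hj1
      have hij : i = j := by simpa using congrArg Prod.fst hj1
      have hii : (i : ℤ) = (i : ℤ) + d * (-m) x := by
        rw [← hj2]; exact_mod_cast congrArg (fun k : ℕ => (k : ℤ)) hij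
      have hdm : (d : ℤ) * (-m) x ≠ 0 := by
        apply mul_ne_zero
        · exact_mod_cast hd.ne'
        · rw [Pi.neg_apply]; exact (ne_of_gt (neg_pos.mpr hneg))
      exact hdm (by linarith)
    · obtain ⟨j, hj1, hj2⟩ := forward h m (fun x i hi => (hZ x i hi).1) x hpos i hi d
      intro hcon
      rw [hcon] at hj1
      have hij : i = j := by simpa using congrArg Prod.fst hj1
      have hii : (i : ℤ) = (i : ℤ) + d * m x := by
        rw [← hj2]; exact_mod_cast congrArg (fun k : ℕ => (k : ℤ)) hij
      have hdm : (d : ℤ) * m x ≠ 0 := mul_ne_zero (by exact_mod_cast hd.ne')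
        (ne_of_gt hpos)
      exact hdm (by linarith)
  -- far out points on zero rays are fixed
  have farfix : ∀ (x : Fin n) (i : ℕ), m x = 0 → Z ≤ i → h (i, x) = (i, x) := by
    intro x i hmx hi
    obtain ⟨h2, h1⟩ := (hZ x i hi).1
    rw [hmx, add_zero] at h1
    exact Prod.ext_iff.mpr ⟨by exact_mod_cast h1, h2⟩
  set Per : (ℕ × Fin n) → Prop := fun u => ∃ d : ℕ, 0 < d ∧ (h ^ d) u = u with hPerdef
  set PP : Set (ℕ × Fin n) := {u | Per u ∧ h u ≠ u} with hPPdef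
  have hPPsub : PP ⊆ {u : ℕ × Fin n | u.1 < Z} := by
    rintro ⟨i, x⟩ ⟨⟨d, hd, hfix⟩, hne⟩
    by_contra hcon
    have hi : Z ≤ i := le_of_not_gt hcon
    by_cases hmx : m x = 0
    · exact hne (farfix x i hmx hi)
    · exact nonper x i hmx hi d hd hfix
  have hregfin : Set.Finite {u : ℕ × Fin n | u.1 < Z} := by
    have : {u : ℕ × Fin n | u.1 < Z} ⊆ (Set.Iio Z) ×ˢ (Set.univ : Set (Fin n)) := by
      rintro ⟨i, x⟩ hi
      exact ⟨hi, trivial⟩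
    exact Set.Finite.subset ((Set.finite_Iio Z).prod Set.finite_univ) this
  have hPPfin : PP.Finite := hregfin.subset hPPsub
  set Pf : Finset (ℕ × Fin n) := hPPfin.toFinset with hPfdef
  set N : ℕ := (Pf.card).factorial with hNdef
  have hN : 0 < N := Nat.factorial_pos _
  -- each periodic point is fixed by h^D whenever N ∣ D
  have periodic_fix : ∀ u : ℕ × Fin n, Per u → ∀ D : ℕ, N ∣ D → (h ^ D) u = u := by
    intro u hPer D hND
    by_cases hfu : h u = u
    · exact fixed_pow hfu D
    · set d : ℕ := Nat.find hPer with hddef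
      obtain ⟨hd0, hdfix⟩ : 0 < d ∧ (h ^ d) u = u := Nat.find_spec hPer
      -- the orbit points h^t u, t < d, are distinct elements of PP
      have horb : ∀ t : ℕ, (h ^ t) u ∈ Pf := by
        intro t
        rw [hPfdef, Set.Finite.mem_toFinset]
        constructor
        · exact ⟨d, hd0, by rw [pow_apply_commute h d t u, hdfix]⟩
        · intro hcon
          apply hfu
          have : h ((h ^ t) u) = (h ^ t) (h u) := by
            rw [← Equiv.Perm.mul_apply, ← Equiv.Perm.mul_apply, ← pow_succ, ← pow_succ']
          rw [this] at hcon
          exact (Equiv.injective _) hcon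
      have hinj : ∀ s t : ℕ, s < t → t < d → (h ^ s) u ≠ (h ^ t) u := by
        intro s t hst htd hcon
        have : (h ^ (t - s)) u = u := by
          have h1 : (h ^ s) ((h ^ (t - s)) u) = (h ^ s) u := by
            rw [← Equiv.Perm.mul_apply, ← pow_add, Nat.add_sub_cancel' (le_of_lt hst)]
            exact hcon.symm
          exact (Equiv.injective _) h1
        have hlt : t - s < d := lt_of_le_of_lt (Nat.sub_le t s) htd
        exact (Nat.find_min hPer hlt) ⟨by omega, this⟩
      -- d ≤ Pf.card
      have hdle : d ≤ Pf.card := by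
        have : Function.Injective (fun t : Fin d => (⟨(h ^ (t : ℕ)) u, horb t⟩ : ↥Pf)) := by
          intro s t hst
          have h1 : (h ^ (s : ℕ)) u = (h ^ (t : ℕ)) u := congrArg Subtype.val hst
          rcases lt_trichotomy (s : ℕ) (t : ℕ) with hl | he | hg
          · exact absurd h1 (hinj _ _ hl t.2)
          · exact Fin.ext he
          · exact absurd h1.symm (hinj _ _ hg s.2)
        calc d = Fintype.card (Fin d) := (Fintype.card_fin d).symm
          _ ≤ Fintype.card ↥Pf := Fintype.card_le_of_injective _ this
          _ = Pf.card := Fintype.card_coe _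
      have hdvd : d ∣ D := dvd_trans (Nat.dvd_factorial hd0 hdle) hND
      obtain ⟨e, rfl⟩ := hdvd
      rw [pow_mul]
      exact fixed_pow hdfix e
  -- if m = 0 then every point is periodic, making h of finite order
  have hm0 : m ≠ 0 := by
    intro hm0
    apply hord
    have hallper : ∀ u : ℕ × Fin n, Per u := by
      intro u
      by_cases hfu : h u = u
      · exact ⟨1, Nat.one_pos, by simpa using hfu⟩
      · -- orbit stays in finite region
        have hmem : ∀ t : ℕ, (h ^ t) u ∈ {v : ℕ × Fin n | v.1 < Z} := by
          intro t
          by_contra hcon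
          have hZle : Z ≤ ((h ^ t) u).1 := le_of_not_gt hcon
          have : h ((h ^ t) u) = (h ^ t) u := by
            have := farfix ((h ^ t) u).2 ((h ^ t) u).1 (by rw [hm0]; rfl) hZle
            simpa using this
          have h2 : h ((h ^ t) u) = (h ^ t) (h u) := by
            rw [← Equiv.Perm.mul_apply, ← Equiv.Perm.mul_apply, ← pow_succ, ← pow_succ']
          rw [h2] at this
          exact hfu ((Equiv.injective _) this)
        have : ¬ Function.Injective (fun t : ℕ => (h ^ t) u) := by
          intro hinj
          exact (Set.infinite_range_of_injective hinj)
            (hregfin.subset (Set.range_subset_iff.mpr hmem))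
        rw [Function.not_injective_iff] at this
        obtain ⟨s, t, heq, hne⟩ := this
        rcases lt_or_gt_of_ne hne with hlt | hgt
        · refine ⟨t - s, by omega, ?_⟩
          have h1 : (h ^ s) ((h ^ (t - s)) u) = (h ^ s) u := by
            rw [← Equiv.Perm.mul_apply, ← pow_add, Nat.add_sub_cancel' (le_of_lt hlt)]
            exact heq.symm
          exact (Equiv.injective _) h1
        · refine ⟨s - t, by omega, ?_⟩
          have h1 : (h ^ t) ((h ^ (s - t)) u) = (h ^ t) u := by
            rw [← Equiv.Perm.mul_apply, ← pow_add, Nat.add_sub_cancel' (le_of_lt hgt)]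
            exact heq
          exact (Equiv.injective _) h1
    have : h ^ N = 1 := Equiv.ext fun u => by
      simpa using periodic_fix u (hallper u) N (dvd_refl N)
    exact isOfFinOrder_iff_pow_eq_one.mpr ⟨N, hN, this⟩
  refine ⟨hm0, N, hN, ?_⟩
  intro u d hd hfix
  rw [← pow_mul] at hfix
  exact periodic_fix u ⟨N * d, by positivity, hfix⟩ N (dvd_refl N)

end Aux
section Aux2

open Equiv Subgroup

variable {n : ℕ}

/-- Rigidity: if `k` is a "pure" element of Houghton's group (all finite orbits
are fixed points) and a conjugate `g k g⁻¹` by an element of Houghton's group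
has the same positive power `a` as `k`, then the conjugate equals `k`. -/
private lemma rigidity (k g : Equiv.Perm (ℕ × Fin n)) (μ mg : Fin n → ℤ)
    (hkv : EvTrans n (⇑k) μ) (hgv : EvTrans n (⇑g) mg)
    (hpure : ∀ (u : ℕ × Fin n) (d : ℕ), 0 < d → (k ^ d) u = u → k u = u)
    (a : ℕ) (ha : 0 < a) (heq : (g * k * g⁻¹) ^ a = k ^ a) :
    g * k * g⁻¹ = k := by
  classical
  set k' : Equiv.Perm (ℕ × Fin n) := g * k * g⁻¹ with hk'def
  have hk'v : EvTrans n (⇑k') ((mg + μ) + -mg) :=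
    evtrans_mul (evtrans_mul hgv hkv) (evtrans_inv hgv)
  have hpure' : ∀ (u : ℕ × Fin n) (d : ℕ), 0 < d → (k' ^ d) u = u → k' u = u := by
    intro u d hd hfix
    have hc : k' ^ d = g * k ^ d * g⁻¹ := by rw [hk'def, conj_pow]
    rw [hc] at hfix
    have h1 : (k ^ d) (g⁻¹ u) = g⁻¹ u := by
      have := congrArg (⇑g⁻¹) hfix
      simpa [Equiv.Perm.mul_apply] using this
    have h2 : k (g⁻¹ u) = g⁻¹ u := hpure _ d hd h1
    show (g * k * g⁻¹) u = u
    rw [Equiv.Perm.mul_apply, Equiv.Perm.mul_apply, h2]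
    exact Equiv.apply_symm_apply g u
  set w : Equiv.Perm (ℕ × Fin n) := k ^ a with hwdef
  have hcomm : Commute k w := (Commute.refl k).pow_right a
  have hcomm' : Commute k' w := heq ▸ (Commute.refl k').pow_right a
  apply Equiv.ext
  intro u
  by_cases hfix : k u = u
  · have h1 : (k' ^ a) u = u := by rw [heq]; exact fixed_pow hfix a
    rw [hpure' u a ha h1, hfix]
  · -- escape to infinity along the w-orbit
    have hwfix : ∀ t : ℕ, 0 < t → (w ^ t) u ≠ u := by
      intro t ht hcon
      rw [hwdef, ← pow_mul] at hcon
      exact hfix (hpure u (a * t) (by positivity) hcon)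
    have hinj : Function.Injective (fun t : ℕ => (w ^ t) u) := by
      intro s t hst
      simp only at hst
      by_contra hne
      rcases lt_or_gt_of_ne hne with hlt | hgt
      · have h1 : (w ^ s) ((w ^ (t - s)) u) = (w ^ s) u := by
          rw [← Equiv.Perm.mul_apply, ← pow_add, Nat.add_sub_cancel' (le_of_lt hlt)]
          exact hst.symm
        exact hwfix (t - s) (by omega) ((Equiv.injective _) h1)
      · have h1 : (w ^ t) ((w ^ (s - t)) u) = (w ^ t) u := by
          rw [← Equiv.Perm.mul_apply, ← pow_add, Nat.add_sub_cancel' (le_of_lt hgt)]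
          exact hst
        exact hwfix (s - t) (by omega) ((Equiv.injective _) h1)
    choose zk hzk using hkv
    choose zk' hzk' using hk'v
    set B : ℕ := Finset.univ.sup (fun x => max (zk x) (zk' x)) with hBdef
    have hescape : ∃ t : ℕ, B ≤ ((w ^ t) u).1 := by
      by_contra hcon
      push_neg at hcon
      have hsub : Set.range (fun t : ℕ => (w ^ t) u) ⊆ (Set.Iio B) ×ˢ (Set.univ : Set (Fin n)) := by
        rintro v ⟨t, rfl⟩
        exact ⟨hcon t, trivial⟩
      exact (Set.infinite_range_of_injective hinj)
        (((Set.finite_Iio B).prod Set.finite_univ).subset hsub)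
    obtain ⟨t, hB⟩ := hescape
    set v : ℕ × Fin n := (w ^ t) u with hvdef
    have hsup : max (zk v.2) (zk' v.2) ≤ B :=
      Finset.le_sup (f := fun x => max (zk x) (zk' x)) (Finset.mem_univ v.2)
    have hBk : zk v.2 ≤ v.1 := le_trans (le_trans (le_max_left _ _) hsup) hB
    have hBk' : zk' v.2 ≤ v.1 := le_trans (le_trans (le_max_right _ _) hsup) hB
    obtain ⟨ha2, ha1⟩ := hzk v.2 v.1 hBk
    obtain ⟨hb2, hb1⟩ := hzk' v.2 v.1 hBk'
    have hveta : ((v.1, v.2) : ℕ × Fin n) = v := rfl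
    rw [hveta] at ha2 ha1 hb2 hb1
    have hkk' : k' v = k v := by
      have hfst : ((k' v).1 : ℤ) = ((k v).1 : ℤ) := by
        rw [ha1, hb1]
        simp only [Pi.add_apply, Pi.neg_apply]
        ring
      refine Prod.ext_iff.mpr ⟨by exact_mod_cast hfst, by rw [ha2, hb2]⟩
    have hL : k' ((w ^ t) u) = (w ^ t) (k' u) := by
      have := (hcomm'.pow_right t).eq
      calc k' ((w ^ t) u) = (k' * w ^ t) u := rfl
        _ = (w ^ t * k') u := by rw [this]
        _ = (w ^ t) (k' u) := rfl
    have hR : k ((w ^ t) u) = (w ^ t) (k u) := by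
      have := (hcomm.pow_right t).eq
      calc k ((w ^ t) u) = (k * w ^ t) u := rfl
        _ = (w ^ t * k) u := by rw [this]
        _ = (w ^ t) (k u) := rfl
    have : (w ^ t) (k' u) = (w ^ t) (k u) := by
      rw [← hL, ← hR]
      exact hkk'
    exact (Equiv.injective _) this

/-- The subgroup generated by one element is cyclic. -/
private lemma zpowers_isCyclic {G : Type*} [Group G] (g : G) :
    IsCyclic ↥(Subgroup.zpowers g) := by
  refine ⟨⟨⟨g, Subgroup.mem_zpowers g⟩, ?_⟩⟩
  rintro ⟨x, hx⟩
  obtain ⟨k, hk⟩ := Subgroup.mem_zpowers_iff.mp hx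
  refine Subgroup.mem_zpowers_iff.mpr ⟨k, ?_⟩
  apply Subtype.ext
  simp only [SubgroupClass.coe_zpow]
  exact hk

/-- If `zpowers g` has finite index, so does `zpowers (g ^ N)` for `N > 0`. -/
private lemma finiteIndex_zpowers_pow {G : Type*} [Group G] (g : G)
    (hfi : (Subgroup.zpowers g).FiniteIndex) (N : ℕ) (hN : 0 < N) :
    (Subgroup.zpowers (g ^ N)).FiniteIndex := by
  classical
  haveI := hfi
  haveI : Finite (G ⧸ Subgroup.zpowers g) := Subgroup.finite_quotient_of_finiteIndex
  have hsurj : Function.Surjective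
      (fun p : (G ⧸ Subgroup.zpowers g) × Fin N =>
        (QuotientGroup.mk (Quotient.out p.1 * g ^ ((p.2 : ℕ) : ℤ)) :
          G ⧸ Subgroup.zpowers (g ^ N))) := by
    intro y
    obtain ⟨x, rfl⟩ := QuotientGroup.mk_surjective y
    set q : G ⧸ Subgroup.zpowers g := QuotientGroup.mk x with hqdef
    have hout : (QuotientGroup.mk q.out : G ⧸ Subgroup.zpowers g) = QuotientGroup.mk x :=
      QuotientGroup.out_eq' q
    have hmem : q.out⁻¹ * x ∈ Subgroup.zpowers g := QuotientGroup.eq.mp hout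
    obtain ⟨mm, hmm⟩ := Subgroup.mem_zpowers_iff.mp hmem
    have hNZ : (0 : ℤ) < (N : ℤ) := by exact_mod_cast hN
    have hj0 : (0 : ℤ) ≤ mm % N := Int.emod_nonneg mm (ne_of_gt hNZ)
    have hjlt : mm % N < N := Int.emod_lt_of_pos mm hNZ
    refine ⟨(q, ⟨(mm % N).toNat, by omega⟩), ?_⟩
    simp only
    rw [QuotientGroup.eq]
    have hjcast : (((mm % N).toNat : ℕ) : ℤ) = mm % N := Int.toNat_of_nonneg hj0
    refine Subgroup.mem_zpowers_iff.mpr ⟨mm / N, ?_⟩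
    have hx : x = q.out * g ^ mm := by
      rw [hmm, mul_inv_cancel_left]
    rw [hx, hjcast]
    rw [mul_inv_rev, mul_assoc, inv_mul_cancel_left, ← zpow_neg, ← zpow_add]
    have harith : -(mm % (N : ℤ)) + mm = (N : ℤ) * (mm / (N : ℤ)) := by
      have := Int.mul_ediv_add_emod mm (N : ℤ)
      linarith
    rw [harith, zpow_mul, zpow_natCast]
  haveI : Finite (G ⧸ Subgroup.zpowers (g ^ N)) := Finite.of_surjective _ hsurj
  exact Subgroup.finiteIndex_of_finite_quotient

end Aux2

/-- For every infinite virtually cyclic subgroup `K` of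
Houghton's group `H_n` there is an infinite cyclic subgroup `L` of finite
index in `K` (in particular `K ∩ L = L` is infinite, so `L` is commensurate
with `K`) such that an element `g` of `H_n` satisfies `|L ∩ gLg⁻¹| = ∞` if
and only if `g` normalizes `L`. -/
theorem houghton_commensurator_is_normalizer (n : ℕ) (hn : 1 ≤ n)
    (K : Subgroup (Equiv.Perm (ℕ × Fin n))) (hK : K ≤ Houghton n)
    (hinf : Infinite K)
    (hvc : ∃ C : Subgroup ↥K, C.FiniteIndex ∧ IsCyclic ↥C) :
    ∃ L : Subgroup (Equiv.Perm (ℕ × Fin n)), L ≤ K ∧ IsCyclic ↥L ∧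
      Infinite ↥L ∧ (L.subgroupOf K).FiniteIndex ∧ Infinite ↥(K ⊓ L) ∧
      ∀ g ∈ Houghton n,
        (Infinite ↥(L ⊓ Subgroup.map (MulAut.conj g).toMonoidHom L) ↔
          g ∈ Subgroup.normalizer (L : Set (Equiv.Perm (ℕ × Fin n)))) := by
  classical
  obtain ⟨C, hCfi, hCcyc⟩ := hvc
  haveI := hinf
  haveI := hCfi
  haveI := hCcyc
  have hKcard : Nat.card ↥K = 0 := @Nat.card_eq_zero_of_infinite _ hinf
  have hCcard : Nat.card ↥C = 0 := by
    have hmul := Subgroup.card_mul_index C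
    rw [hKcard] at hmul
    rcases Nat.mul_eq_zero.mp hmul with h0 | h0
    · exact h0
    · exact absurd h0 hCfi.index_ne_zero
  haveI hCinf : Infinite ↥C := by
    rcases Nat.card_eq_zero.mp hCcard with hEmp | hInf
    · exact (hEmp.elim (1 : ↥C))
    · exact hInf
  obtain ⟨c, hc⟩ := IsCyclic.exists_generator (α := ↥C)
  have hordc : ¬ IsOfFinOrder c := by
    intro hfin
    have hfin2 : (Subgroup.zpowers c : Set ↥C).Finite := hfin.finite_zpowers
    have huniv : (Subgroup.zpowers c : Set ↥C) = Set.univ :=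
      Set.eq_univ_of_forall (fun x => hc x)
    rw [huniv] at hfin2
    haveI := Set.finite_univ_iff.mp hfin2
    exact not_finite ↥C
  have hordh : ¬ IsOfFinOrder (((c : ↥K) : Equiv.Perm (ℕ × Fin n))) := by
    have hinj : Function.Injective (K.subtype.comp C.subtype) :=
      (Subgroup.subtype_injective K).comp (Subgroup.subtype_injective C)
    have h1 : orderOf ((K.subtype.comp C.subtype) c) = orderOf c :=
      orderOf_injective _ hinj c
    intro hfin
    apply hordc
    rw [← orderOf_pos_iff] at hfin ⊢
    have h2 : (K.subtype.comp C.subtype) c = ((c : ↥K) : Equiv.Perm (ℕ × Fin n)) := rfl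
    rw [h2] at h1
    omega
  obtain ⟨m, hmv⟩ : ∃ m' : Fin n → ℤ,
      EvTrans n (⇑((c : ↥K) : Equiv.Perm (ℕ × Fin n))) m' := hK (c : ↥K).2
  obtain ⟨hm0, N, hN, hpure⟩ :=
    exists_good_power (((c : ↥K) : Equiv.Perm (ℕ × Fin n))) m hmv hordh
  set k : Equiv.Perm (ℕ × Fin n) := (((c : ↥K) : Equiv.Perm (ℕ × Fin n))) ^ N with hkdef
  set L : Subgroup (Equiv.Perm (ℕ × Fin n)) := Subgroup.zpowers k with hLdef
  have hkv : EvTrans n (⇑k) ((N : ℤ) • m) := evtrans_pow hmv N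
  obtain ⟨x₀, hx₀⟩ : ∃ x, m x ≠ 0 := Function.ne_iff.mp hm0
  have hμx : (N : ℤ) * m x₀ ≠ 0 :=
    mul_ne_zero (by exact_mod_cast hN.ne') hx₀
  have hordk : ¬ IsOfFinOrder k := by
    intro hfin
    apply hordh
    rcases isOfFinOrder_iff_pow_eq_one.mp hfin with ⟨t, ht, hteq⟩
    refine isOfFinOrder_iff_pow_eq_one.mpr ⟨N * t, by positivity, ?_⟩
    rw [pow_mul]
    exact hteq
  have hLinf : Infinite ↥L := Set.infinite_coe_iff.mpr (infinite_zpowers.mpr hordk)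
  have hkK : k ∈ K := by
    have h1 := ((c : ↥K) ^ N).2
    have h2 : (((c : ↥K) ^ N : ↥K) : Equiv.Perm (ℕ × Fin n)) = k := by
      rw [hkdef]; push_cast; rfl
    rwa [h2] at h1
  have hLK : L ≤ K := Subgroup.zpowers_le.mpr hkK
  refine ⟨L, hLK, zpowers_isCyclic k, hLinf, ?_, ?_, ?_⟩
  · -- finite index of L.subgroupOf K
    have hCle : C ≤ Subgroup.zpowers (c : ↥K) := by
      intro x hx
      obtain ⟨mm, hmm⟩ := Subgroup.mem_zpowers_iff.mp (hc ⟨x, hx⟩)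
      refine Subgroup.mem_zpowers_iff.mpr ⟨mm, ?_⟩
      have := congrArg (C.subtype) hmm
      simpa using this
    have hfi1 : (Subgroup.zpowers (c : ↥K)).FiniteIndex := by
      constructor
      intro h0i
      apply hCfi.index_ne_zero
      have hdvd := Subgroup.index_dvd_of_le hCle
      rwa [h0i, zero_dvd_iff] at hdvd
    have hfi2 : (Subgroup.zpowers ((c : ↥K) ^ N)).FiniteIndex :=
      finiteIndex_zpowers_pow _ hfi1 N hN
    have hle2 : Subgroup.zpowers ((c : ↥K) ^ N) ≤ L.subgroupOf K := by
      apply Subgroup.zpowers_le.mpr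
      rw [Subgroup.mem_subgroupOf]
      have h2 : (((c : ↥K) ^ N : ↥K) : Equiv.Perm (ℕ × Fin n)) = k := by
        rw [hkdef]; push_cast; rfl
      rw [h2]
      exact Subgroup.mem_zpowers k
    constructor
    intro h0i
    apply hfi2.index_ne_zero
    have hdvd := Subgroup.index_dvd_of_le hle2
    rwa [h0i, zero_dvd_iff] at hdvd
  · rw [inf_eq_right.mpr hLK]
    exact hLinf
  · intro g hgH
    obtain ⟨mg, hgv⟩ : ∃ mg : Fin n → ℤ, EvTrans n (⇑g) mg := hgH
    constructor
    · intro hInfM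
      haveI := hInfM
      obtain ⟨x, hxne⟩ :=
        exists_ne (1 : ↥(L ⊓ Subgroup.map (MulAut.conj g).toMonoidHom L))
      obtain ⟨hxL, hxM⟩ := Subgroup.mem_inf.mp x.2
      obtain ⟨cc, hcc⟩ := Subgroup.mem_zpowers_iff.mp hxL
      obtain ⟨y, hyL, hyx⟩ := Subgroup.mem_map.mp hxM
      obtain ⟨bb, hbb⟩ := Subgroup.mem_zpowers_iff.mp hyL
      have hcc0 : cc ≠ 0 := by
        intro h0'
        apply hxne
        have hx1 : (x : Equiv.Perm (ℕ × Fin n)) = 1 := by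
          rw [← hcc, h0', zpow_zero]
        exact Subtype.ext (by rw [hx1]; rfl)
      have hyx' : g * y * g⁻¹ = (x : Equiv.Perm (ℕ × Fin n)) := by
        simpa [MulAut.conj_apply] using hyx
      have eq1 : g * k ^ bb * g⁻¹ = k ^ cc := by
        rw [hbb, hyx', ← hcc]
      have hv1 : EvTrans n (⇑(k ^ cc)) (cc • ((N : ℤ) • m)) := evtrans_zpow hkv cc
      have hv2 : EvTrans n (⇑(k ^ cc)) ((mg + bb • ((N : ℤ) • m)) + -mg) := by
        rw [← eq1]
        exact evtrans_mul (evtrans_mul hgv (evtrans_zpow hkv bb)) (evtrans_inv hgv)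
      have huniq := congrFun (evtrans_unique hv1 hv2) x₀
      simp only [Pi.add_apply, Pi.neg_apply, Pi.smul_apply, smul_eq_mul] at huniq
      have hccbb : cc = bb := by
        have h2 : cc * ((N : ℤ) * m x₀) = bb * ((N : ℤ) * m x₀) := by linarith
        exact mul_right_cancel₀ hμx h2
      have eq2 : g * k ^ cc * g⁻¹ = k ^ cc := by rw [← hccbb] at eq1; exact eq1
      have e1 : (g * k * g⁻¹) ^ cc = k ^ cc := by rw [conj_zpow]; exact eq2
      have eq3 : (g * k * g⁻¹) ^ (cc.natAbs) = k ^ (cc.natAbs) := by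
        rcases Int.natAbs_eq cc with hpos | hneg
        · rw [← zpow_natCast (g * k * g⁻¹), ← zpow_natCast k, ← hpos]
          exact e1
        · have e2 : (g * k * g⁻¹) ^ (-cc) = k ^ (-cc) := by
            rw [zpow_neg, zpow_neg, e1]
          have hnn : -cc = ((cc.natAbs : ℕ) : ℤ) := by omega
          rw [hnn] at e2
          rw [← zpow_natCast (g * k * g⁻¹), ← zpow_natCast k]
          exact e2
      have hconj : g * k * g⁻¹ = k :=
        rigidity k g _ mg hkv hgv hpure cc.natAbs (Int.natAbs_pos.mpr hcc0) eq3
      rw [Subgroup.mem_normalizer_iff]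
      intro h'
      constructor
      · intro hh'
        obtain ⟨dd, hdd⟩ := Subgroup.mem_zpowers_iff.mp hh'
        rw [← hdd]
        refine Subgroup.mem_zpowers_iff.mpr ⟨dd, ?_⟩
        rw [← conj_zpow, hconj]
      · intro hh'
        obtain ⟨dd, hdd⟩ := Subgroup.mem_zpowers_iff.mp hh'
        refine Subgroup.mem_zpowers_iff.mpr ⟨dd, ?_⟩
        have h3 : g * h' * g⁻¹ = (g * k * g⁻¹) ^ dd := by rw [hconj]; exact hdd.symm
        rw [conj_zpow] at h3
        exact (mul_left_cancel (mul_right_cancel h3)).symm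
    · intro hnorm
      have hmap : Subgroup.map (MulAut.conj g).toMonoidHom L = L := by
        apply le_antisymm
        · intro x hx
          obtain ⟨y, hy, hxy⟩ := Subgroup.mem_map.mp hx
          have h1 := (Subgroup.mem_normalizer_iff.mp hnorm y).mp hy
          have h2 : (MulAut.conj g).toMonoidHom y = g * y * g⁻¹ := by
            simp [MulAut.conj_apply]
          rw [← hxy, h2]
          exact h1
        · intro y hy
          refine Subgroup.mem_map.mpr ⟨g⁻¹ * y * g, ?_, ?_⟩
          · have hiff := Subgroup.mem_normalizer_iff.mp hnorm (g⁻¹ * y * g)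
            apply hiff.mpr
            have h4 : g * (g⁻¹ * y * g) * g⁻¹ = y := by group
            rwa [h4]
          · show (MulAut.conj g).toMonoidHom (g⁻¹ * y * g) = y
            have h2 : (MulAut.conj g).toMonoidHom (g⁻¹ * y * g) =
                g * (g⁻¹ * y * g) * g⁻¹ := by simp [MulAut.conj_apply]
            rw [h2]
            group
      rw [hmap, inf_idem]
      exact hLinf
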